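/- Let G = (I* ∪ K, E) be a split graph with K a clique and I* a maximum independent set, and let H be any graph. Then γ_gr(G ∘ H) = |I*|·γ_gr(H) + n(G), where n(G) = 1 if there exist v, w ∈ K with N(v) ∩ N(w) ∩ I* = ∅ and n(G) = 0 otherwise. -/

import Mathlib

namespace GrundyDom

/-- Closed neighborhood N[v]. -/
def cn {V : Type*} (G : SimpleGraph V) (v : V) : Set V := insert v (G.neighborSet v)

/-- Union of closed neighborhoods of the vertices of a list. -/
def cnUnion {V : Type*} (G : SimpleGraph V) (L : List V) : Set V := ⋃ v ∈ L, cn G v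

/-- Private neighborhood of `v` with respect to the first `i` entries of `S`:
`N[v] \ (N[v_1] ∪ ... ∪ N[v_i])`. -/
def PN {V : Type*} (G : SimpleGraph V) (S : List V) (i : ℕ) (v : V) : Set V :=
  cn G v \ cnUnion G (S.take i)

/-- A legal dominating sequence: distinct vertices, dominating set, and every
vertex of the sequence has a nonempty private neighborhood w.r.t. its predecessors. -/
structure IsLegal {V : Type*} (G : SimpleGraph V) (S : List V) : Prop where
  nodup : S.Nodup
  dominates : ∀ v : V, ∃ u ∈ S, v ∈ cn G u
  legal : ∀ i : Fin S.length, (PN G S i.val (S.get i)).Nonempty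

/-- The set `I_S` of vertices that footprint themselves in `S`. -/
def selfFoot {V : Type*} (G : SimpleGraph V) (S : List V) : Set V :=
  {v | ∃ i : Fin S.length, S.get i = v ∧ v ∈ PN G S i.val v}

/-- Grundy domination number: maximum length of a legal dominating sequence. -/
noncomputable def gammaGr {V : Type*} (G : SimpleGraph V) : ℕ :=
  sSup {k | ∃ S : List V, IsLegal G S ∧ S.length = k}

/-- `γ_gr(G, I)`: maximum length of a legal dominating sequence `S` with `I_S = I`. -/
noncomputable def gammaGrOn {V : Type*} (G : SimpleGraph V) (I : Set V) : ℕ :=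
  sSup {k | ∃ S : List V, IsLegal G S ∧ selfFoot G S = I ∧ S.length = k}

/-- `γ_gr^u(G)`: maximum of `γ_gr(G, I)` over independent sets `I` containing `u`. -/
noncomputable def gammaGrVert {V : Type*} (G : SimpleGraph V) (u : V) : ℕ :=
  sSup {k | ∃ I : Set V, (∀ ⦃a⦄, a ∈ I → ∀ ⦃b⦄, b ∈ I → a ≠ b → ¬ G.Adj a b) ∧
    u ∈ I ∧ k = gammaGrOn G I}

/-- Independent set of a graph. -/
def IsIndep {V : Type*} (G : SimpleGraph V) (I : Set V) : Prop :=
  ∀ ⦃u⦄, u ∈ I → ∀ ⦃v⦄, v ∈ I → u ≠ v → ¬ G.Adj u v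

/-- The X-join product `G ↩ 𝓡`: replace each vertex `v` of `G` by the graph `R v`. -/
def XJoin {V : Type*} (G : SimpleGraph V) {W : V → Type*} (R : ∀ v, SimpleGraph (W v)) :
    SimpleGraph (Σ v, W v) where
  Adj x y := G.Adj x.1 y.1 ∨ ∃ h : x.1 = y.1, (R y.1).Adj (h ▸ x.2) y.2
  symm := ⟨by
    rintro ⟨a, xa⟩ ⟨b, yb⟩ (h | ⟨h, hadj⟩)
    · exact Or.inl h.symm
    · dsimp at h hadj
      subst h
      exact Or.inr ⟨rfl, hadj.symm⟩⟩
  loopless := ⟨by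
    rintro ⟨a, xa⟩ (h | ⟨h, hadj⟩)
    · exact h.ne rfl
    · exact hadj.ne rfl⟩

/-- The lexicographic product `G ∘ H`. -/
def Lex {V W : Type*} (G : SimpleGraph V) (H : SimpleGraph W) : SimpleGraph (V × W) where
  Adj x y := G.Adj x.1 y.1 ∨ (x.1 = y.1 ∧ H.Adj x.2 y.2)
  symm := ⟨by
    rintro x y (h | ⟨h1, h2⟩)
    · exact Or.inl h.symm
    · exact Or.inr ⟨h1.symm, h2.symm⟩⟩
  loopless := ⟨by
    rintro x (h | ⟨_, h⟩)
    · exact h.ne rfl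
    · exact h.ne rfl⟩

/-- The replacement graph `G_{u ↩ H}`: replace the vertex `u` of `G` by `H`. -/
def Replace {V : Type*} (G : SimpleGraph V) (u : V) {W : Type*} (H : SimpleGraph W) :
    SimpleGraph ({v : V // v ≠ u} ⊕ W) where
  Adj x y :=
    match x, y with
    | Sum.inl a, Sum.inl b => G.Adj a.1 b.1
    | Sum.inl a, Sum.inr _ => G.Adj a.1 u
    | Sum.inr _, Sum.inl b => G.Adj u b.1
    | Sum.inr h1, Sum.inr h2 => H.Adj h1 h2
  symm := ⟨by rintro (a|a) (b|b) h <;> exact h.symm⟩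
  loopless := ⟨by rintro (a|a) h <;> exact h.ne rfl⟩

/-- `C_n^m`: the m-th power of the n-cycle, on vertex set `ZMod n`;
two vertices are adjacent iff their circular distance is between 1 and m. -/
def cyclePow (n m : ℕ) : SimpleGraph (ZMod n) where
  Adj i j := i ≠ j ∧ ∃ k : ℕ, 1 ≤ k ∧ k ≤ m ∧ (j = i + k ∨ i = j + k)
  symm := ⟨by
    rintro i j ⟨hne, k, h1, h2, h3⟩
    exact ⟨hne.symm, k, h1, h2, h3.symm⟩⟩
  loopless := ⟨fun i h => h.1 rfl⟩

/-- `P_n^m`: the m-th power of the n-path, on vertex set `Fin n`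
(vertex `i` represents the `(i+1)`-st vertex of the path);
two vertices adjacent iff their distance is between 1 and m. -/
def pathPow (n m : ℕ) : SimpleGraph (Fin n) where
  Adj i j := i ≠ j ∧ Nat.dist i.val j.val ≤ m
  symm := ⟨by
    rintro i j ⟨hne, hd⟩
    exact ⟨hne.symm, by rwa [Nat.dist_comm]⟩⟩
  loopless := ⟨fun i h => h.1 rfl⟩

end GrundyDom

namespace GrundyDom

variable {V : Type*} {G : SimpleGraph V}

lemma mem_cn {x v : V} : x ∈ cn G v ↔ x = v ∨ G.Adj v x := by
  simp [cn]

lemma self_mem_cn (v : V) : v ∈ cn G v := by simp [cn]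

lemma mem_cnUnion {x : V} {L : List V} : x ∈ cnUnion G L ↔ ∃ v ∈ L, x ∈ cn G v := by
  simp [cnUnion]

lemma cnUnion_nil : cnUnion G ([] : List V) = ∅ := by simp [cnUnion]

lemma cnUnion_cons (a : V) (L : List V) :
    cnUnion G (a :: L) = cn G a ∪ cnUnion G L := by
  ext x; simp [mem_cnUnion, or_and_right, exists_or]

lemma cnUnion_append (L1 L2 : List V) :
    cnUnion G (L1 ++ L2) = cnUnion G L1 ∪ cnUnion G L2 := by
  ext x; simp [mem_cnUnion, or_and_right, exists_or]

lemma cnUnion_mono {L1 L2 : List V} (h : L1 ⊆ L2) : cnUnion G L1 ⊆ cnUnion G L2 := by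
  intro x hx
  obtain ⟨v, hv, hxv⟩ := mem_cnUnion.mp hx
  exact mem_cnUnion.mpr ⟨v, h hv, hxv⟩

lemma cnUnion_take_mono (S : List V) {i j : ℕ} (h : i ≤ j) :
    cnUnion G (S.take i) ⊆ cnUnion G (S.take j) := by
  apply cnUnion_mono
  have heq : S.take i = (S.take j).take i := by rw [List.take_take, min_eq_left h]
  rw [heq]
  exact List.take_subset _ _

lemma mem_cnUnion_take {S : List V} {i : ℕ} {x : V} :
    x ∈ cnUnion G (S.take i) ↔ ∃ j : Fin S.length, j.val < i ∧ x ∈ cn G (S.get j) := by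
  rw [mem_cnUnion]
  constructor
  · rintro ⟨v, hv, hx⟩
    rw [List.mem_take_iff_getElem] at hv
    obtain ⟨j, hj, rfl⟩ := hv
    have hj1 : j < S.length := lt_of_lt_of_le hj (min_le_right _ _)
    have hj2 : j < i := lt_of_lt_of_le hj (min_le_left _ _)
    exact ⟨⟨j, hj1⟩, hj2, by simpa using hx⟩
  · rintro ⟨j, hj, hx⟩
    refine ⟨S.get j, ?_, hx⟩
    rw [List.mem_take_iff_getElem]
    have := j.isLt
    exact ⟨j.val, by omega, by simp⟩

/-- A legal (not necessarily dominating) sequence. -/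
def Legalish (G : SimpleGraph V) (S : List V) : Prop :=
  S.Nodup ∧ ∀ i : Fin S.length, (PN G S i.val (S.get i)).Nonempty

lemma IsLegal.legalish {S : List V} (h : IsLegal G S) : Legalish G S := ⟨h.nodup, h.legal⟩

lemma legalish_append {S : List V} {x : V} (hS : Legalish G S) (hx : x ∉ cnUnion G S) :
    Legalish G (S ++ [x]) := by
  have hxS : x ∉ S := fun h => hx (mem_cnUnion.mpr ⟨x, h, self_mem_cn x⟩)
  constructor
  · simp only [List.nodup_append, List.nodup_cons, List.nodup_nil]
    exact ⟨hS.1, by simp, by simp; intro a ha hax; subst hax; exact hxS ha⟩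
  · intro i
    have hilen : i.val < S.length + 1 := by simpa using i.isLt
    rcases lt_or_ge i.val S.length with h | h
    · have hget : (S ++ [x]).get i = S.get ⟨i.val, h⟩ := by
        simp [List.getElem_append_left h]
      have htake : (S ++ [x]).take i.val = S.take i.val :=
        List.take_append_of_le_length (by omega)
      obtain ⟨y, hy1, hy2⟩ := hS.2 ⟨i.val, h⟩
      refine ⟨y, ?_, ?_⟩
      · show y ∈ cn G ((S ++ [x]).get i)
        rw [hget]; exact hy1
      · show y ∉ cnUnion G ((S ++ [x]).take i.val)
        rw [htake]; exact hy2
    · have hiv : i.val = S.length := by omega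
      have hget : (S ++ [x]).get i = x := by
        rcases i with ⟨iv, hi⟩
        subst hiv
        simp
      have htake : (S ++ [x]).take i.val = S :=
        by rw [hiv]; exact List.take_append_of_le_length le_rfl |>.trans (by simp)
      refine ⟨x, ?_⟩
      rw [PN, hget, htake]
      exact ⟨self_mem_cn x, hx⟩

lemma legalish_to_legal [Fintype V] (G : SimpleGraph V) (S : List V) (hS : Legalish G S) :
    ∃ T : List V, IsLegal G T ∧ S.length ≤ T.length := by
  classical
  suffices H : ∀ m (S : List V),
      (Finset.univ.filter (fun v => v ∉ cnUnion G S)).card = m → Legalish G S →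
      ∃ T, IsLegal G T ∧ S.length ≤ T.length from H _ S rfl hS
  intro m
  induction m using Nat.strong_induction_on with
  | _ m ih =>
    intro S hm hS
    by_cases hd : ∀ v, v ∈ cnUnion G S
    · exact ⟨S, ⟨hS.1, fun v => mem_cnUnion.mp (hd v), hS.2⟩, le_rfl⟩
    · push_neg at hd
      obtain ⟨x, hx⟩ := hd
      have hS' : Legalish G (S ++ [x]) := legalish_append hS hx
      have hsub : cnUnion G S ⊆ cnUnion G (S ++ [x]) := by
        rw [cnUnion_append]; exact Set.subset_union_left
      have hlt : (Finset.univ.filter (fun v => v ∉ cnUnion G (S ++ [x]))).card < m := by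
        rw [← hm]
        apply Finset.card_lt_card
        constructor
        · intro v hv
          simp only [Finset.mem_filter, Finset.mem_univ, true_and] at *
          exact fun h => hv (hsub h)
        · intro hsub2
          have hx2 : x ∈ Finset.univ.filter (fun v => v ∉ cnUnion G S) := by
            simp [hx]
          have := hsub2 hx2
          simp only [Finset.mem_filter, Finset.mem_univ, true_and] at this
          exact this (by rw [cnUnion_append]; exact Or.inr (mem_cnUnion.mpr ⟨x, by simp, self_mem_cn x⟩))
      obtain ⟨T, hT, hlen⟩ := ih _ hlt (S ++ [x]) rfl hS'
      refine ⟨T, hT, le_trans ?_ hlen⟩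
      simp

lemma length_le_gammaGr [Fintype V] {S : List V} (hS : IsLegal G S) : S.length ≤ gammaGr G := by
  apply le_csSup
  · refine ⟨Fintype.card V, ?_⟩
    rintro k ⟨T, hT, rfl⟩
    exact hT.nodup.length_le_card
  · exact ⟨S, hS, rfl⟩

lemma legalish_length_le [Fintype V] {S : List V} (hS : Legalish G S) : S.length ≤ gammaGr G := by
  obtain ⟨T, hT, hl⟩ := legalish_to_legal G S hS
  exact hl.trans (length_le_gammaGr hT)

lemma legalish_nondom_length [Fintype V] {S : List V} {x : V} (hS : Legalish G S)
    (hx : x ∉ cnUnion G S) : S.length + 1 ≤ gammaGr G := by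
  have := legalish_length_le (legalish_append hS hx)
  simpa using this

lemma exists_isLegal_gammaGr [Fintype V] (G : SimpleGraph V) :
    ∃ S, IsLegal G S ∧ S.length = gammaGr G := by
  have hne : {k | ∃ S : List V, IsLegal G S ∧ S.length = k}.Nonempty := by
    obtain ⟨T, hT, _⟩ := legalish_to_legal G []
      ⟨List.nodup_nil, fun i => absurd i.isLt (by simp)⟩
    exact ⟨T.length, T, hT, rfl⟩
  have hbdd : BddAbove {k | ∃ S : List V, IsLegal G S ∧ S.length = k} := by
    refine ⟨Fintype.card V, ?_⟩
    rintro k ⟨T, hT, rfl⟩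
    exact hT.nodup.length_le_card
  exact Nat.sSup_mem hne hbdd

end GrundyDom
namespace GrundyDom

variable {V : Type*} {G : SimpleGraph V}

/-- Recursive form of legality, carrying the dominated set. -/
def Aux (G : SimpleGraph V) : List V → Set V → Prop
  | [], _ => True
  | a :: l, D => (cn G a \ D).Nonempty ∧ Aux G l (D ∪ cn G a)

lemma aux_not_mem : ∀ {S : List V} {D : Set V}, Aux G S D → ∀ {a : V}, cn G a ⊆ D → a ∉ S := by
  intro S
  induction S with
  | nil => intro D _ a _; simp
  | cons b l ih =>
    intro D h a ha
    obtain ⟨h1, h2⟩ := h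
    simp only [List.mem_cons]
    rintro (rfl | hm)
    · obtain ⟨y, hy1, hy2⟩ := h1
      exact hy2 (ha hy1)
    · exact ih h2 (ha.trans Set.subset_union_left) hm

lemma aux_nodup : ∀ {S : List V} {D : Set V}, Aux G S D → S.Nodup := by
  intro S
  induction S with
  | nil => simp
  | cons b l ih =>
    intro D h
    obtain ⟨h1, h2⟩ := h
    exact List.nodup_cons.mpr ⟨aux_not_mem h2 Set.subset_union_right, ih h2⟩

lemma aux_pn : ∀ {S : List V} {D : Set V}, Aux G S D →
    ∀ i : Fin S.length, (cn G (S.get i) \ (D ∪ cnUnion G (S.take i.val))).Nonempty := by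
  intro S
  induction S with
  | nil => intro D _ i; exact absurd i.isLt (by simp)
  | cons b l ih =>
    intro D h i
    obtain ⟨h1, h2⟩ := h
    rcases i with ⟨iv, hi⟩
    cases iv with
    | zero => simpa [cnUnion_nil] using h1
    | succ j =>
      have hj : j < l.length := by simpa using hi
      have := ih h2 ⟨j, hj⟩
      obtain ⟨y, hy1, hy2⟩ := this
      refine ⟨y, by simpa using hy1, ?_⟩
      intro hy
      apply hy2
      simp only [List.take_succ_cons, cnUnion_cons, Set.mem_union] at hy ⊢
      tauto

lemma aux_of_pn : ∀ {S : List V} {D : Set V},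
    (∀ i : Fin S.length, (cn G (S.get i) \ (D ∪ cnUnion G (S.take i.val))).Nonempty) →
    Aux G S D := by
  intro S
  induction S with
  | nil => intro D _; trivial
  | cons b l ih =>
    intro D h
    constructor
    · simpa [cnUnion_nil] using h ⟨0, by simp⟩
    · apply ih
      intro i
      have hi : i.val + 1 < (b :: l).length := by simpa using i.isLt
      obtain ⟨y, hy1, hy2⟩ := h ⟨i.val + 1, hi⟩
      refine ⟨y, by simpa using hy1, ?_⟩
      intro hy
      apply hy2
      simp only [List.take_succ_cons, cnUnion_cons, Set.mem_union] at hy ⊢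
      tauto

lemma isLegal_of_aux {S : List V} (h : Aux G S ∅) (hdom : ∀ v : V, ∃ u ∈ S, v ∈ cn G u) :
    IsLegal G S := by
  refine ⟨aux_nodup h, hdom, fun i => ?_⟩
  obtain ⟨y, hy1, hy2⟩ := aux_pn h i
  exact ⟨y, hy1, fun hc => hy2 (Or.inr hc)⟩

lemma aux_of_isLegal {S : List V} (hS : IsLegal G S) : Aux G S ∅ := by
  apply aux_of_pn
  intro i
  obtain ⟨y, hy1, hy2⟩ := hS.legal i
  exact ⟨y, hy1, fun hc => hy2 (by simpa using hc)⟩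

lemma aux_congr {S : List V} {D D' : Set V} (h : D = D') : Aux G S D → Aux G S D' := by
  rw [h]; exact id

lemma aux_append : ∀ {S1 S2 : List V} {D : Set V},
    Aux G (S1 ++ S2) D ↔ Aux G S1 D ∧ Aux G S2 (D ∪ cnUnion G S1) := by
  intro S1
  induction S1 with
  | nil => intro S2 D; simp [Aux, cnUnion_nil]
  | cons a l ih =>
    intro S2 D
    constructor
    · rintro ⟨h1, h2⟩
      rw [show l.append S2 = l ++ S2 from rfl, ih] at h2
      obtain ⟨h2, h3⟩ := h2
      refine ⟨⟨h1, h2⟩, aux_congr ?_ h3⟩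
      rw [cnUnion_cons]
      exact Set.union_assoc _ _ _
    · rintro ⟨⟨h1, h2⟩, h3⟩
      refine ⟨h1, ?_⟩
      rw [show l.append S2 = l ++ S2 from rfl, ih]
      refine ⟨h2, aux_congr ?_ h3⟩
      rw [cnUnion_cons]
      exact (Set.union_assoc _ _ _).symm

end GrundyDom
namespace GrundyDom

section LexLemmas

variable {V W : Type*} {G : SimpleGraph V} {H : SimpleGraph W}

lemma mem_cn_lex {a c : V} {b d : W} :
    (a, b) ∈ cn (Lex G H) (c, d) ↔ G.Adj c a ∨ (a = c ∧ b ∈ cn H d) := by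
  rw [mem_cn, mem_cn]
  have hadj : (Lex G H).Adj (c, d) (a, b) ↔ G.Adj c a ∨ (c = a ∧ H.Adj d b) := Iff.rfl
  rw [hadj, Prod.mk.injEq]
  constructor
  · rintro (⟨rfl, rfl⟩ | h | ⟨rfl, h⟩)
    · exact Or.inr ⟨rfl, Or.inl rfl⟩
    · exact Or.inl h
    · exact Or.inr ⟨rfl, Or.inr h⟩
  · rintro (h | ⟨rfl, rfl | h⟩)
    · exact Or.inr (Or.inl h)
    · exact Or.inl ⟨rfl, rfl⟩
    · exact Or.inr (Or.inr ⟨rfl, h⟩)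

lemma aux_map {x : V} : ∀ {T : List W} {E : Set (V × W)},
    Aux H T {k | (x, k) ∈ E} → Aux (Lex G H) (T.map (fun k => (x, k))) E := by
  intro T
  induction T with
  | nil => intro E _; trivial
  | cons a l ih =>
    intro E h
    obtain ⟨⟨y, hy1, hy2⟩, h2⟩ := h
    constructor
    · exact ⟨(x, y), mem_cn_lex.mpr (Or.inr ⟨rfl, hy1⟩), hy2⟩
    · apply ih
      have hs : {k | (x, k) ∈ E} ∪ cn H a = {k | (x, k) ∈ E ∪ cn (Lex G H) (x, a)} := by
        ext k
        simp only [Set.mem_setOf_eq, Set.mem_union]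
        constructor
        · rintro (hE | hk)
          · exact Or.inl hE
          · exact Or.inr (mem_cn_lex.mpr (Or.inr ⟨rfl, hk⟩))
        · rintro (hE | hc)
          · exact Or.inl hE
          · rcases mem_cn_lex.mp hc with hadj | ⟨-, hk⟩
            · exact absurd hadj G.irrefl
            · exact Or.inr hk
      exact aux_congr hs h2

lemma mem_cnUnion_map_copy {x : V} {T : List W} {a : V} {b : W} :
    (a, b) ∈ cnUnion (Lex G H) (T.map (fun k => (x, k))) ↔
      (T ≠ [] ∧ G.Adj x a) ∨ (a = x ∧ ∃ h' ∈ T, b ∈ cn H h') := by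
  rw [mem_cnUnion]
  constructor
  · rintro ⟨v, hv, hxv⟩
    obtain ⟨k, hk, rfl⟩ := List.mem_map.mp hv
    rcases mem_cn_lex.mp hxv with h | ⟨rfl, h⟩
    · exact Or.inl ⟨List.ne_nil_of_mem hk, h⟩
    · exact Or.inr ⟨rfl, k, hk, h⟩
  · rintro (⟨hne, h⟩ | ⟨rfl, k, hk, h⟩)
    · obtain ⟨k, hk⟩ := List.exists_mem_of_ne_nil T hne
      exact ⟨(x, k), List.mem_map_of_mem hk, mem_cn_lex.mpr (Or.inl h)⟩
    · exact ⟨(a, k), List.mem_map_of_mem hk, mem_cn_lex.mpr (Or.inr ⟨rfl, h⟩)⟩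

lemma mem_cnUnion_flatMap {G' : SimpleGraph (V × W)} {xs : List V} {f : V → List (V × W)}
    {p : V × W} :
    p ∈ cnUnion G' (xs.flatMap f) ↔ ∃ x ∈ xs, p ∈ cnUnion G' (f x) := by
  induction xs with
  | nil => simp [cnUnion_nil]
  | cons a l ih => simp [List.flatMap_cons, cnUnion_append, Set.mem_union, ih]

lemma length_flatMap_copies {xs : List V} {T : List W} :
    (xs.flatMap (fun x => T.map (fun k => (x, k)))).length = xs.length * T.length := by
  induction xs with
  | nil => simp
  | cons a l ih =>
    simp only [List.flatMap_cons, List.length_append, List.length_map, ih, List.length_cons]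
    ring

/-- The big copies-sequence over a list of pairwise nonadjacent vertices. -/
lemma aux_flatMap {T : List W} (hT : Aux H T ∅) :
    ∀ {xs : List V} {E : Set (V × W)},
      xs.Pairwise (fun a b => a ≠ b ∧ ¬G.Adj a b) →
      (∀ x ∈ xs, ∀ k : W, (x, k) ∉ E) →
      Aux (Lex G H) (xs.flatMap (fun x => T.map (fun k => (x, k)))) E := by
  intro xs
  induction xs with
  | nil => intro E _ _; trivial
  | cons x l ih =>
    intro E hp hE
    rw [List.flatMap_cons, aux_append]
    constructor
    · apply aux_map
      apply aux_congr ?_ hT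
      ext k
      simp only [Set.mem_empty_iff_false, Set.mem_setOf_eq, false_iff]
      exact hE x (by simp) k
    · apply ih (List.Pairwise.of_cons hp)
      intro y hy k
      rw [Set.mem_union]
      rintro (h | h)
      · exact hE y (by simp [hy]) k h
      · rcases mem_cnUnion_map_copy.mp h with ⟨-, hadj⟩ | ⟨rfl, -⟩
        · exact (List.rel_of_pairwise_cons hp hy).2 hadj
        · exact (List.rel_of_pairwise_cons hp hy).1 rfl

end LexLemmas

end GrundyDom
namespace GrundyDom

section Split

variable {V : Type*} [DecidableEq V] {G : SimpleGraph V} {K Iv : Finset V}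

lemma K_nbr (hdisj : Disjoint K Iv) (hIv : IsIndep G ↑Iv)
    (hmaxind : ∀ J : Finset V, IsIndep G ↑J → J.card ≤ Iv.card)
    {u : V} (hu : u ∈ K) : ∃ x ∈ Iv, G.Adj u x := by
  by_contra hc
  push_neg at hc
  have hJ : IsIndep G ↑(insert u Iv) := by
    intro a ha b hb hne hadj
    simp only [Finset.coe_insert, Set.mem_insert_iff, Finset.mem_coe] at ha hb
    rcases ha with rfl | ha <;> rcases hb with rfl | hb
    · exact hne rfl
    · exact hc b hb hadj
    · exact hc a ha hadj.symm
    · exact hIv ha hb hne hadj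
  have hcard := hmaxind _ hJ
  rw [Finset.card_insert_of_notMem (Finset.disjoint_left.mp hdisj hu)] at hcard
  omega

lemma nbr_in_K (hpart : ∀ v, v ∈ K ∨ v ∈ Iv) (hIv : IsIndep G ↑Iv)
    {z y : V} (hy : y ∈ Iv) (hadj : G.Adj z y) : z ∈ K := by
  rcases hpart z with hz | hz
  · exact hz
  · exact absurd hadj (hIv (Finset.mem_coe.mpr hz) (Finset.mem_coe.mpr hy) hadj.ne)

variable {W : Type*} {H : SimpleGraph W}

lemma lower_bound [Fintype V] [Fintype W] [Nonempty W] [DecidableRel G.Adj]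
    (hpart : ∀ v, v ∈ K ∨ v ∈ Iv) (hdisj : Disjoint K Iv)
    (hK : G.IsClique ↑K) (hIv : IsIndep G ↑Iv)
    (hmaxind : ∀ J : Finset V, IsIndep G ↑J → J.card ≤ Iv.card) :
    ∃ S : List (V × W), IsLegal (Lex G H) S ∧
      S.length = Iv.card * gammaGr H +
        (if ∃ v ∈ K, ∃ w ∈ K, ∀ x ∈ Iv, ¬(G.Adj v x ∧ G.Adj w x) then 1 else 0) := by
  classical
  obtain ⟨SH, hSH, hlenH⟩ := exists_isLegal_gammaGr H
  have hSHaux : Aux H SH ∅ := aux_of_isLegal hSH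
  have hSHne : SH ≠ [] := by
    obtain ⟨h', hh', -⟩ := hSH.dominates (Classical.arbitrary W)
    exact List.ne_nil_of_mem hh'
  have hpw : ∀ s : Finset V, s ⊆ Iv → s.toList.Pairwise (fun a b => a ≠ b ∧ ¬G.Adj a b) := by
    intro s hs
    apply (Finset.nodup_toList s).pairwise_of_forall_ne
    intro a ha b hb hne
    refine ⟨hne, hIv ?_ ?_ hne⟩
    · exact Finset.mem_coe.mpr (hs (Finset.mem_toList.mp ha))
    · exact Finset.mem_coe.mpr (hs (Finset.mem_toList.mp hb))
  have hdom_of : ∀ S : List (V × W), (∀ x ∈ Iv, ∀ h' ∈ SH, (x, h') ∈ S) →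
      ∀ p : V × W, ∃ u ∈ S, p ∈ cn (Lex G H) u := by
    rintro S hmem ⟨u, k⟩
    rcases hpart u with hu | hu
    · obtain ⟨x, hx, hadj⟩ := K_nbr hdisj hIv hmaxind hu
      obtain ⟨h0, hh0⟩ := List.exists_mem_of_ne_nil SH hSHne
      exact ⟨(x, h0), hmem x hx h0 hh0, mem_cn_lex.mpr (Or.inl hadj.symm)⟩
    · obtain ⟨h', hh', hk⟩ := hSH.dominates k
      exact ⟨(u, h'), hmem u hu h' hh', mem_cn_lex.mpr (Or.inr ⟨rfl, hk⟩)⟩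
  by_cases hcond : ∃ v ∈ K, ∃ w ∈ K, ∀ x ∈ Iv, ¬(G.Adj v x ∧ G.Adj w x)
  · obtain ⟨v, hv, w, hw, hnc⟩ := hcond
    have hvw : v ≠ w := by
      rintro rfl
      obtain ⟨x, hx, hadj⟩ := K_nbr hdisj hIv hmaxind hv
      exact (hnc x hx) ⟨hadj, hadj⟩
    have hadjvw : G.Adj v w := hK (Finset.mem_coe.mpr hv) (Finset.mem_coe.mpr hw) hvw
    set A1 := Iv.filter (fun x => G.Adj v x) with hA1
    set A2 := Iv.filter (fun x => ¬G.Adj v x) with hA2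
    have hA1sub : A1 ⊆ Iv := Finset.filter_subset _ _
    have hA2sub : A2 ⊆ Iv := Finset.filter_subset _ _
    set h0 : W := Classical.arbitrary W with hh0def
    set L1 := A1.toList.flatMap (fun x => SH.map (fun k => (x, k))) with hL1
    set L2 := A2.toList.flatMap (fun x => SH.map (fun k => (x, k))) with hL2
    set S := L1 ++ ((v, h0) :: L2) with hSdef
    have hvK : v ∈ K := hv
    have hvnotIv : v ∉ Iv := Finset.disjoint_left.mp hdisj hv
    have hwnotIv : w ∉ Iv := Finset.disjoint_left.mp hdisj hw
    have haux : Aux (Lex G H) S ∅ := by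
      rw [hSdef, aux_append]
      constructor
      · exact aux_flatMap hSHaux (hpw A1 hA1sub) (fun x _ k h => h)
      · constructor
        · refine ⟨(w, h0), mem_cn_lex.mpr (Or.inl hadjvw), ?_⟩
          rintro (h | h)
          · exact h
          · obtain ⟨x, hx, hmem⟩ := mem_cnUnion_flatMap.mp h
            have hxA1 := Finset.mem_filter.mp (Finset.mem_toList.mp hx)
            rcases mem_cnUnion_map_copy.mp hmem with ⟨-, hadj⟩ | ⟨rfl, -⟩
            · exact hnc x hxA1.1 ⟨hxA1.2, hadj.symm⟩
            · exact hwnotIv hxA1.1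
        · apply aux_flatMap hSHaux (hpw A2 hA2sub)
          intro y hy k
          have hyA2 := Finset.mem_filter.mp (Finset.mem_toList.mp hy)
          rintro ((h | h) | h)
          · exact h
          · obtain ⟨x, hx, hmem⟩ := mem_cnUnion_flatMap.mp h
            have hxA1 := Finset.mem_filter.mp (Finset.mem_toList.mp hx)
            rcases mem_cnUnion_map_copy.mp hmem with ⟨-, hadj⟩ | ⟨rfl, -⟩
            · have hne : x ≠ y := fun he => hyA2.2 (he ▸ hxA1.2)
              exact hIv (Finset.mem_coe.mpr hxA1.1) (Finset.mem_coe.mpr hyA2.1) hne hadj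
            · exact hyA2.2 hxA1.2
          · rcases mem_cn_lex.mp h with hadj | ⟨rfl, -⟩
            · exact hyA2.2 hadj
            · exact hvnotIv hyA2.1
    refine ⟨S, isLegal_of_aux haux (hdom_of S ?_), ?_⟩
    · intro x hx h' hh'
      rw [hSdef, List.mem_append]
      by_cases hadj : G.Adj v x
      · exact Or.inl (List.mem_flatMap.mpr ⟨x, Finset.mem_toList.mpr
          (Finset.mem_filter.mpr ⟨hx, hadj⟩), List.mem_map_of_mem hh'⟩)
      · refine Or.inr (List.mem_cons.mpr (Or.inr ?_))
        exact List.mem_flatMap.mpr ⟨x, Finset.mem_toList.mpr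
          (Finset.mem_filter.mpr ⟨hx, hadj⟩), List.mem_map_of_mem hh'⟩
    · rw [hSdef]
      simp only [List.length_append, List.length_cons]
      rw [hL1, hL2, length_flatMap_copies, length_flatMap_copies, Finset.length_toList,
        Finset.length_toList, hlenH, if_pos ⟨v, hv, w, hw, hnc⟩]
      have hsplit : A1.card + A2.card = Iv.card := by
        rw [hA1, hA2]
        exact Finset.card_filter_add_card_filter_not _
      rw [← hsplit, Nat.add_mul]
      ring
  · refine ⟨Iv.toList.flatMap (fun x => SH.map (fun k => (x, k))), isLegal_of_aux
      (aux_flatMap hSHaux (hpw Iv (Finset.Subset.refl Iv)) (fun x _ k h => h))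
      (hdom_of _ ?_), ?_⟩
    · intro x hx h' hh'
      exact List.mem_flatMap.mpr ⟨x, Finset.mem_toList.mpr hx, List.mem_map_of_mem hh'⟩
    · rw [if_neg hcond, length_flatMap_copies, Finset.length_toList, hlenH, Nat.add_zero]

end Split

end GrundyDom
namespace GrundyDom

section UpperBasic

variable {V W : Type*} {G : SimpleGraph V} {H : SimpleGraph W}

/-- First coordinate of the i-th play. -/
def vP (S : List (V × W)) (i : Fin S.length) : V := (S.get i).1

/-- Second coordinate of the i-th play. -/
def hP (S : List (V × W)) (i : Fin S.length) : W := (S.get i).2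

/-- The set dominated after the first `j` plays. -/
def domAt (G : SimpleGraph V) (H : SimpleGraph W) (S : List (V × W)) (j : ℕ) : Set (V × W) :=
  cnUnion (Lex G H) (S.take j)

/-- Play `i` footprints a vertex of its own copy. -/
def isSelfP (G : SimpleGraph V) (H : SimpleGraph W) (S : List (V × W)) (i : Fin S.length) : Prop :=
  ∃ k, k ∈ cn H (hP S i) ∧ (vP S i, k) ∉ domAt G H S i.val

variable {S : List (V × W)}

lemma domAt_mono {i j : ℕ} (h : i ≤ j) : domAt G H S i ⊆ domAt G H S j :=
  cnUnion_take_mono S h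

lemma mem_domAt {q : V × W} {j : ℕ} :
    q ∈ domAt G H S j ↔ ∃ i : Fin S.length, i.val < j ∧ q ∈ cn (Lex G H) (S.get i) :=
  mem_cnUnion_take

lemma mem_cn_play {i : Fin S.length} {a : V} {b : W} :
    (a, b) ∈ cn (Lex G H) (S.get i) ↔ G.Adj (vP S i) a ∨ (a = vP S i ∧ b ∈ cn H (hP S i)) := by
  have : S.get i = (vP S i, hP S i) := rfl
  rw [this, mem_cn_lex]

lemma closes {i : Fin S.length} {x : V} (hadj : G.Adj (vP S i) x) {j : ℕ}
    (hj : i.val < j) (k : W) : (x, k) ∈ domAt G H S j :=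
  mem_domAt.mpr ⟨i, hj, mem_cn_play.mpr (Or.inl hadj)⟩

lemma copy_closes {i : Fin S.length} {k : W} (hk : k ∈ cn H (hP S i)) {j : ℕ}
    (hj : i.val < j) : (vP S i, k) ∈ domAt G H S j :=
  mem_domAt.mpr ⟨i, hj, mem_cn_play.mpr (Or.inr ⟨rfl, hk⟩)⟩

lemma legal_pn (hS : IsLegal (Lex G H) S) (i : Fin S.length) :
    ∃ q, q ∈ cn (Lex G H) (S.get i) ∧ q ∉ domAt G H S i.val := by
  obtain ⟨q, hq1, hq2⟩ := hS.legal i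
  exact ⟨q, hq1, hq2⟩

/-- An other play has an unclosed neighbouring copy. -/
lemma other_target (hS : IsLegal (Lex G H) S) {i : Fin S.length} (hns : ¬ isSelfP G H S i) :
    ∃ w, G.Adj (vP S i) w ∧ ∃ k, (w, k) ∉ domAt G H S i.val := by
  obtain ⟨⟨a, b⟩, hq1, hq2⟩ := legal_pn hS i
  rcases mem_cn_play.mp hq1 with hadj | ⟨rfl, hb⟩
  · exact ⟨a, hadj, b, hq2⟩
  · exact absurd ⟨b, hb, hq2⟩ hns

/-- No play occurs in the copy of an other play before it. -/
lemma other_no_before (hS : IsLegal (Lex G H) S) {i : Fin S.length} (hns : ¬ isSelfP G H S i)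
    {j : Fin S.length} (hj : j < i) : vP S j ≠ vP S i := by
  intro he
  obtain ⟨w, hadj, k, hk⟩ := other_target hS hns
  exact hk (closes (he ▸ hadj : G.Adj (vP S j) w) hj k)

/-- The copy of an other play was closed earlier by a play in a neighbouring copy. -/
lemma other_host (hS : IsLegal (Lex G H) S) {i : Fin S.length} (hns : ¬ isSelfP G H S i) :
    ∃ j : Fin S.length, j < i ∧ G.Adj (vP S j) (vP S i) := by
  have hmem : (vP S i, hP S i) ∈ domAt G H S i.val := by
    by_contra hc
    exact hns ⟨hP S i, self_mem_cn _, hc⟩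
  obtain ⟨j, hj, hcn⟩ := mem_domAt.mp hmem
  have hj' : j < i := hj
  rcases mem_cn_play.mp hcn with hadj | ⟨he, -⟩
  · exact ⟨j, hj', hadj⟩
  · exact absurd (he ▸ rfl : vP S j = vP S i).symm (fun h => other_no_before hS hns hj' h.symm)

/-- The copy of an other play contains no further play at all. -/
lemma other_unique (hS : IsLegal (Lex G H) S) {i : Fin S.length} (hns : ¬ isSelfP G H S i)
    {j : Fin S.length} (he : vP S j = vP S i) : j = i := by
  rcases lt_trichotomy j i with h | h | h
  · exact absurd he (other_no_before hS hns h)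
  · exact h
  · exfalso
    obtain ⟨⟨a, b⟩, hq1, hq2⟩ := legal_pn hS j
    rcases mem_cn_play.mp hq1 with hadj | ⟨rfl, hb⟩
    · rw [he] at hadj
      exact hq2 (closes hadj h b)
    · obtain ⟨j0, hj0, hadj0⟩ := other_host hS hns
      rw [← he] at hadj0
      exact hq2 (closes hadj0 (lt_trans hj0 h) b)

/-- A helper: a list of `W`-vertices with explicit private neighbours is legalish. -/
lemma legalish_of_private {T : List W}
    (h : ∀ i : Fin T.length, ∃ k, k ∈ cn H (T.get i) ∧
      ∀ j : Fin T.length, j < i → k ∉ cn H (T.get j)) : Legalish H T := by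
  constructor
  · rw [List.nodup_iff_injective_get]
    intro i j hij
    by_contra hne
    rcases lt_or_gt_of_ne hne with hlt | hlt
    · obtain ⟨k, hk1, hk2⟩ := h j
      exact hk2 i hlt (hij ▸ hk1)
    · obtain ⟨k, hk1, hk2⟩ := h i
      exact hk2 j hlt (hij ▸ hk1)
  · intro i
    obtain ⟨k, hk1, hk2⟩ := h i
    refine ⟨k, hk1, fun hc => ?_⟩
    obtain ⟨j, hj, hjc⟩ := mem_cnUnion_take.mp hc
    exact hk2 j hj hjc

end UpperBasic

end GrundyDom
namespace GrundyDom

section SelfSeq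

variable {V W : Type*} {G : SimpleGraph V} {H : SimpleGraph W} {S : List (V × W)}

lemma self_seq_legalish (x : V) (F : Finset (Fin S.length))
    (hF : ∀ i ∈ F, isSelfP G H S i ∧ vP S i = x) :
    Legalish H ((F.sort (· ≤ ·)).map (hP S)) := by
  apply legalish_of_private
  intro q
  have hq : q.val < (F.sort (· ≤ ·)).length := by simpa using q.isLt
  set i : Fin S.length := (F.sort (· ≤ ·))[q.val]'hq with hi
  have hiF : i ∈ F := (Finset.mem_sort _).mp (List.getElem_mem hq)
  obtain ⟨hself, hvx⟩ := hF i hiF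
  obtain ⟨k, hk1, hk2⟩ := hself
  have hgetq : ((F.sort (· ≤ ·)).map (hP S)).get q = hP S i := by
    simp [hi]
  refine ⟨k, by rw [hgetq]; exact hk1, ?_⟩
  intro r hr hkr
  have hrlen : r.val < (F.sort (· ≤ ·)).length := by simpa using r.isLt
  set j : Fin S.length := (F.sort (· ≤ ·))[r.val]'hrlen with hj
  have hjF : j ∈ F := (Finset.mem_sort _).mp (List.getElem_mem hrlen)
  obtain ⟨hselfj, hvxj⟩ := hF j hjF
  have hjlt : j < i :=
    List.Pairwise.rel_get_of_lt (Finset.sortedLT_sort F).pairwise (show (⟨r.val, hrlen⟩ : Fin _) < ⟨q.val, hq⟩ from hr)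
  have hgetr : ((F.sort (· ≤ ·)).map (hP S)).get r = hP S j := by
    simp [hj]
  rw [hgetr] at hkr
  have hmem : (vP S j, k) ∈ domAt G H S i.val := copy_closes hkr hjlt
  rw [hvxj, ← hvx] at hmem
  exact hk2 hmem

lemma self_card_le [Fintype W] (x : V) (F : Finset (Fin S.length))
    (hF : ∀ i ∈ F, isSelfP G H S i ∧ vP S i = x) : F.card ≤ gammaGr H := by
  have := legalish_length_le (self_seq_legalish x F hF)
  simpa [Finset.length_sort] using this

lemma self_card_lt [Fintype W] (x : V) (F : Finset (Fin S.length))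
    (hF : ∀ i ∈ F, isSelfP G H S i ∧ vP S i = x)
    {m : ℕ} (k0 : W) (hk0 : (x, k0) ∉ domAt G H S m)
    (hbefore : ∀ i ∈ F, i.val < m) :
    F.card + 1 ≤ gammaGr H := by
  have hnd : k0 ∉ cnUnion H ((F.sort (· ≤ ·)).map (hP S)) := by
    intro hc
    obtain ⟨h', hh', hk⟩ := mem_cnUnion.mp hc
    obtain ⟨j, hjl, rfl⟩ := List.mem_map.mp hh'
    have hjF : j ∈ F := (Finset.mem_sort _).mp hjl
    have hmem : (vP S j, k0) ∈ domAt G H S m := copy_closes hk (hbefore j hjF)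
    rw [(hF j hjF).2] at hmem
    exact hk0 hmem
  have := legalish_nondom_length (self_seq_legalish x F hF) hnd
  simpa [Finset.length_sort] using this

end SelfSeq

end GrundyDom
namespace GrundyDom

section UpperMain

variable {V W : Type*}

lemma upper_bound [Fintype V] [DecidableEq V] [Fintype W] [Nonempty W]
    {G : SimpleGraph V} [DecidableRel G.Adj] {H : SimpleGraph W} {K Iv : Finset V}
    (hpart : ∀ v, v ∈ K ∨ v ∈ Iv) (hdisj : Disjoint K Iv)
    (hK : G.IsClique ↑K) (hIv : IsIndep G ↑Iv)
    (hmaxind : ∀ J : Finset V, IsIndep G ↑J → J.card ≤ Iv.card)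
    {S : List (V × W)} (hS : IsLegal (Lex G H) S) :
    S.length ≤ Iv.card * gammaGr H +
      (if ∃ v ∈ K, ∃ w ∈ K, ∀ x ∈ Iv, ¬(G.Adj v x ∧ G.Adj w x) then 1 else 0) := by
  classical
  have hγ1 : 1 ≤ gammaGr H := by
    obtain ⟨SH, hSH, hlen⟩ := exists_isLegal_gammaGr H
    obtain ⟨h', hh', -⟩ := hSH.dominates (Classical.arbitrary W)
    have hne : SH.length ≠ 0 := by
      intro h0
      rw [List.length_eq_zero_iff] at h0
      subst h0
      simp at hh'
    omega
  set γ := gammaGr H with hγ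
  set SelfIdx : Finset (Fin S.length) := Finset.univ.filter (fun i => isSelfP G H S i)
    with hSelfIdx
  set OtherIdx : Finset (Fin S.length) := Finset.univ.filter (fun i => ¬ isSelfP G H S i)
    with hOtherIdx
  set A : Finset V := SelfIdx.image (vP S) with hA
  set Fx : V → Finset (Fin S.length) := fun x => SelfIdx.filter (fun i => vP S i = x) with hFx
  have hFxmem : ∀ x : V, ∀ i ∈ Fx x, isSelfP G H S i ∧ vP S i = x := by
    intro x i hi
    rw [hFx, Finset.mem_filter, hSelfIdx, Finset.mem_filter] at hi
    exact ⟨hi.1.2, hi.2⟩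
  have hmemA : ∀ {x : V}, x ∈ A ↔ ∃ i : Fin S.length, isSelfP G H S i ∧ vP S i = x := by
    intro x
    constructor
    · intro hx
      obtain ⟨i, hi, he⟩ := Finset.mem_image.mp hx
      exact ⟨i, (Finset.mem_filter.mp hi).2, he⟩
    · rintro ⟨i, hi, he⟩
      exact Finset.mem_image.mpr ⟨i, Finset.mem_filter.mpr ⟨Finset.mem_univ _, hi⟩, he⟩
  have hOmem : ∀ {i : Fin S.length}, i ∈ OtherIdx ↔ ¬ isSelfP G H S i := by
    intro i
    rw [hOtherIdx, Finset.mem_filter]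
    simp
  -- targets
  have hchoice : ∀ i : Fin S.length, ∃ w : V,
      ¬ isSelfP G H S i → G.Adj (vP S i) w ∧ ∃ k, (w, k) ∉ domAt G H S i.val := by
    intro i
    by_cases h : isSelfP G H S i
    · exact ⟨vP S i, fun hns => absurd h hns⟩
    · obtain ⟨w, hw1, hw2⟩ := other_target hS h
      exact ⟨w, fun _ => ⟨hw1, hw2⟩⟩
  choose tgt htgt using hchoice
  have htgtadj : ∀ i ∈ OtherIdx, G.Adj (vP S i) (tgt i) := fun i hi => (htgt i (hOmem.mp hi)).1
  have htgtop : ∀ i ∈ OtherIdx, ∃ k, (tgt i, k) ∉ domAt G H S i.val :=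
    fun i hi => (htgt i (hOmem.mp hi)).2
  set T : Finset V := OtherIdx.image tgt with hT
  have htgtinj : Set.InjOn tgt ↑OtherIdx := by
    have key : ∀ i ∈ OtherIdx, ∀ j ∈ OtherIdx, i < j → tgt i ≠ tgt j := by
      intro i hi j hj hlt he
      obtain ⟨k, hk⟩ := htgtop j hj
      rw [← he] at hk
      exact hk (closes (htgtadj i hi) hlt k)
    intro i hi j hj hij
    rcases lt_trichotomy i j with h | h | h
    · exact absurd hij (key i hi j hj h)
    · exact h
    · exact absurd hij.symm (key j hj i hi h)
  have hTcard : T.card = OtherIdx.card := Finset.card_image_of_injOn htgtinj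
  -- generic facts about targets
  have htnoadj : ∀ i0 ∈ OtherIdx, ∀ j : Fin S.length, j < i0 → ¬ G.Adj (vP S j) (tgt i0) := by
    intro i0 hi0 j hj hadj
    obtain ⟨k, hk⟩ := htgtop i0 hi0
    exact hk (closes hadj hj k)
  have htnoplay : ∀ i0 ∈ OtherIdx, tgt i0 ∉ A → ∀ j : Fin S.length, j ≤ i0 → vP S j ≠ tgt i0 := by
    intro i0 hi0 hnA j hj he
    rcases eq_or_lt_of_le hj with heq | hlt
    · subst heq
      exact (htgtadj j hi0).ne he
    · by_cases hsj : isSelfP G H S j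
      · exact hnA (hmemA.mpr ⟨j, hsj, he⟩)
      · obtain ⟨j0, hj0, hadj0⟩ := other_host hS hsj
        rw [he] at hadj0
        exact htnoadj i0 hi0 j0 (lt_trans hj0 hlt) hadj0
  -- self plays in a target copy all happen before the closing play
  have hFxtgt : ∀ i0 ∈ OtherIdx, (Fx (tgt i0)).card + 1 ≤ γ := by
    intro i0 hi0
    obtain ⟨k0, hk0⟩ := htgtop i0 hi0
    apply self_card_lt (tgt i0) (Fx (tgt i0)) (hFxmem (tgt i0)) k0 hk0
    intro i hiF
    obtain ⟨hself, hvx⟩ := hFxmem (tgt i0) i hiF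
    by_contra hge
    push_neg at hge
    have hne : i ≠ i0 := fun he => (hOmem.mp hi0) (he ▸ hself)
    have hlt : i0.val < i.val := by
      have := Fin.val_ne_of_ne hne
      omega
    obtain ⟨k, hk1, hk2⟩ := hself
    rw [hvx] at hk2
    exact hk2 (closes (htgtadj i0 hi0) hlt k)
  -- counting
  have hcount : S.length = SelfIdx.card + OtherIdx.card := by
    rw [hSelfIdx, hOtherIdx, Finset.card_filter_add_card_filter_not]
    simp
  have hfiber : SelfIdx.card = ∑ x ∈ A, (Fx x).card := by
    apply Finset.card_eq_sum_card_fiberwise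
    intro i hi
    exact Finset.mem_image_of_mem _ hi
  have hsum1 : ∑ x ∈ A ∩ T, ((Fx x).card + 1) ≤ (A ∩ T).card * γ := by
    apply Finset.sum_le_card_nsmul
    intro x hx
    obtain ⟨i0, hi0, htg⟩ := Finset.mem_image.mp (Finset.mem_inter.mp hx).2
    rw [← htg]
    exact hFxtgt i0 hi0
  have hsum2 : ∑ x ∈ A \ T, (Fx x).card ≤ (A \ T).card * γ := by
    apply Finset.sum_le_card_nsmul
    intro x hx
    exact self_card_le x (Fx x) (hFxmem x)
  have hsplitA : ∑ x ∈ A ∩ T, (Fx x).card + ∑ x ∈ A \ T, (Fx x).card = ∑ x ∈ A, (Fx x).card :=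
    Finset.sum_inter_add_sum_sdiff _ _ _
  have hsum1' : ∑ x ∈ A ∩ T, ((Fx x).card + 1)
      = ∑ x ∈ A ∩ T, (Fx x).card + (A ∩ T).card := by
    rw [Finset.sum_add_distrib, Finset.sum_const, smul_eq_mul, mul_one]
  have hTsplit : (T ∩ A).card + (T \ A).card = T.card := Finset.card_inter_add_card_sdiff _ _
  have hAsplit : (A ∩ T).card + (A \ T).card = A.card := Finset.card_inter_add_card_sdiff _ _
  have hTA : (T ∩ A).card = (A ∩ T).card := by rw [Finset.inter_comm]
  have hmain : S.length ≤ A.card * γ + (T \ A).card := by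
    have e1 : S.length = (∑ x ∈ A ∩ T, (Fx x).card + (A ∩ T).card)
        + ∑ x ∈ A \ T, (Fx x).card + (T \ A).card := by omega
    rw [e1, ← hsum1']
    have e2 : (A ∩ T).card * γ + (A \ T).card * γ = A.card * γ := by
      rw [← Nat.add_mul, hAsplit]
    omega
  -- splitting the non-self targets
  set TNA : Finset V := T \ A with hTNA
  set T0 : Finset V := TNA.filter (fun y => y ∈ K) with hT0
  set T1 : Finset V := TNA.filter (fun y => y ∉ K) with hT1
  have hbsplit : T0.card + T1.card = TNA.card :=
    Finset.card_filter_add_card_filter_not _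
  have hT1Iv : ∀ y ∈ T1, y ∈ Iv := by
    intro y hy
    rw [hT1, Finset.mem_filter] at hy
    exact (hpart y).resolve_left hy.2
  have hpack : ∀ y ∈ TNA, ∃ i0, i0 ∈ OtherIdx ∧ tgt i0 = y := by
    intro y hy
    obtain ⟨i0, hi0, he⟩ := Finset.mem_image.mp (Finset.mem_sdiff.mp hy).1
    exact ⟨i0, hi0, he⟩
  have hTnA : ∀ y ∈ TNA, y ∉ A := fun y hy => (Finset.mem_sdiff.mp hy).2
  -- independence of A
  have hAadj : ∀ x ∈ A, ∀ y ∈ A, x ≠ y → ¬ G.Adj x y := by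
    have key : ∀ (i j : Fin S.length), isSelfP G H S i → isSelfP G H S j → i < j →
        ¬ G.Adj (vP S i) (vP S j) := by
      intro i j hi hj hlt hadj
      obtain ⟨k, hk1, hk2⟩ := hj
      exact hk2 (closes hadj hlt k)
    intro x hx y hy hne hadj
    obtain ⟨i, hi, hvix⟩ := hmemA.mp hx
    obtain ⟨j, hj, hvjy⟩ := hmemA.mp hy
    have hij : i ≠ j := fun he => hne (by rw [← hvix, ← hvjy, he])
    rcases lt_or_gt_of_ne hij with h | h
    · exact key i j hi hj h (by rwa [hvix, hvjy])
    · exact key j i hj hi h (by rw [hvix, hvjy]; exact hadj.symm)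
  -- host of a K-target not in A is in K
  have hhostK : ∀ i0 ∈ OtherIdx, tgt i0 ∉ A → tgt i0 ∈ K → vP S i0 ∈ K := by
    intro i0 hi0 hnA htK
    rcases hpart (vP S i0) with h | h
    · exact h
    · exfalso
      obtain ⟨j0, hj0, hadj0⟩ := other_host hS (hOmem.mp hi0)
      have hj0K : vP S j0 ∈ K := nbr_in_K hpart hIv h hadj0
      have hne : vP S j0 ≠ tgt i0 := htnoplay i0 hi0 hnA j0 (le_of_lt hj0)
      have hadj : G.Adj (vP S j0) (tgt i0) :=
        hK (Finset.mem_coe.mpr hj0K) (Finset.mem_coe.mpr htK) hne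
      exact htnoadj i0 hi0 j0 hj0 hadj
  -- at most one element of T0
  have hT0card : T0.card ≤ 1 := by
    have haux : ∀ (i1 i2 : Fin S.length), i1 ∈ OtherIdx → i2 ∈ OtherIdx → i1 < i2 →
        tgt i1 ∉ A → tgt i2 ∉ A → tgt i1 ∈ K → tgt i2 ∈ K → False := by
      intro i1 i2 h1 h2 hlt hnA1 hnA2 hK1 hK2
      have hv1K : vP S i1 ∈ K := hhostK i1 h1 hnA1 hK1
      have hne : vP S i1 ≠ tgt i2 := htnoplay i2 h2 hnA2 i1 (le_of_lt hlt)
      have hadj : G.Adj (vP S i1) (tgt i2) :=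
        hK (Finset.mem_coe.mpr hv1K) (Finset.mem_coe.mpr hK2) hne
      exact htnoadj i2 h2 i1 hlt hadj
    rw [Finset.card_le_one]
    intro y hy z hz
    by_contra hne
    have hyK : y ∈ K := (Finset.mem_filter.mp hy).2
    have hzK : z ∈ K := (Finset.mem_filter.mp hz).2
    have hyT : y ∈ TNA := Finset.mem_of_mem_filter _ hy
    have hzT : z ∈ TNA := Finset.mem_of_mem_filter _ hz
    obtain ⟨i1, hi1, htg1⟩ := hpack y hyT
    obtain ⟨i2, hi2, htg2⟩ := hpack z hzT
    have hii : i1 ≠ i2 := by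
      intro he
      exact hne (by rw [← htg1, ← htg2, he])
    rcases lt_or_gt_of_ne hii with h | h
    · exact haux i1 i2 hi1 hi2 h (htg1 ▸ hTnA y hyT) (htg2 ▸ hTnA z hzT)
        (htg1 ▸ hyK) (htg2 ▸ hzK)
    · exact haux i2 i1 hi2 hi1 h (htg2 ▸ hTnA z hzT) (htg1 ▸ hTnA y hyT)
        (htg2 ▸ hzK) (htg1 ▸ hyK)
  -- a K-vertex of A cannot be adjacent to the target of an other play with K-host
  have hcore : ∀ i0 ∈ OtherIdx, ∀ u ∈ A, u ∈ K → G.Adj u (tgt i0) → vP S i0 ∈ K → False := by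
    intro i0 hi0 u hu huK hadj hv0K
    have hnou : ∀ j : Fin S.length, j ≤ i0 → vP S j ≠ u := by
      intro j hj he
      rcases eq_or_lt_of_le hj with heq | hlt
      · obtain ⟨iu, hself, hviu⟩ := hmemA.mp hu
        have heq2 := other_unique hS (hOmem.mp hi0)
          (show vP S iu = vP S i0 by rw [hviu, ← heq]; exact he.symm)
        exact (hOmem.mp hi0) (heq2 ▸ hself)
      · exact htnoadj i0 hi0 j hlt (by rw [he]; exact hadj)
    obtain ⟨iu, hself, hviu⟩ := hmemA.mp hu
    have hlt : i0 < iu := by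
      rcases le_or_gt iu i0 with h | h
      · exact absurd hviu (hnou iu h)
      · exact h
    have hv0ne : vP S i0 ≠ u := hnou i0 le_rfl
    have hadj0 : G.Adj (vP S i0) u :=
      hK (Finset.mem_coe.mpr hv0K) (Finset.mem_coe.mpr huK) hv0ne
    obtain ⟨k, hk1, hk2⟩ := hself
    rw [hviu] at hk2
    exact hk2 (closes hadj0 hlt k)
  -- A∪T1 independence bound
  have hInd2 : ∀ u ∈ A, u ∈ K → ∀ y ∈ T1, ¬ G.Adj u y := by
    intro u hu huK y hy hadj
    have hyTNA : y ∈ TNA := Finset.mem_of_mem_filter _ hy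
    obtain ⟨i0, hi0, htg⟩ := hpack y hyTNA
    have hv0K : vP S i0 ∈ K :=
      nbr_in_K hpart hIv (hT1Iv y hy) (htg ▸ htgtadj i0 hi0)
    exact hcore i0 hi0 u hu huK (htg ▸ hadj) hv0K
  have hindep1 : A.card + T1.card ≤ Iv.card := by
    have hdisjAT1 : Disjoint A T1 := by
      rw [Finset.disjoint_left]
      intro a ha ha1
      exact hTnA a (Finset.mem_of_mem_filter _ ha1) ha
    have hind : IsIndep G ↑(A ∪ T1) := by
      intro a ha b hb hne hadj
      rw [Finset.mem_coe, Finset.mem_union] at ha hb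
      rcases ha with ha | ha <;> rcases hb with hb | hb
      · exact hAadj a ha b hb hne hadj
      · rcases hpart a with haK | haIv
        · exact hInd2 a ha haK b hb hadj
        · exact hIv (Finset.mem_coe.mpr haIv) (Finset.mem_coe.mpr (hT1Iv b hb)) hne hadj
      · rcases hpart b with hbK | hbIv
        · exact hInd2 b hb hbK a ha hadj.symm
        · exact hIv (Finset.mem_coe.mpr (hT1Iv a ha)) (Finset.mem_coe.mpr hbIv) hne hadj
      · exact hIv (Finset.mem_coe.mpr (hT1Iv a ha)) (Finset.mem_coe.mpr (hT1Iv b hb)) hne hadj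
    have := hmaxind (A ∪ T1) hind
    rwa [Finset.card_union_of_disjoint hdisjAT1] at this
  -- final case analysis
  by_cases hcond : ∃ v ∈ K, ∃ w ∈ K, ∀ x ∈ Iv, ¬(G.Adj v x ∧ G.Adj w x)
  · rw [if_pos hcond]
    have h1 : TNA.card ≤ T1.card + 1 := by omega
    have h2 : T1.card ≤ T1.card * γ := by
      calc T1.card = T1.card * 1 := (mul_one _).symm
        _ ≤ T1.card * γ := Nat.mul_le_mul_left _ hγ1
    calc S.length ≤ A.card * γ + TNA.card := hmain
      _ ≤ A.card * γ + T1.card + 1 := by omega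
      _ ≤ A.card * γ + T1.card * γ + 1 := by omega
      _ = (A.card + T1.card) * γ + 1 := by ring
      _ ≤ Iv.card * γ + 1 := Nat.add_le_add_right (Nat.mul_le_mul_right γ hindep1) 1
  · rw [if_neg hcond]
    rcases Finset.eq_empty_or_nonempty T0 with hT0e | hT0ne
    · have hT0z : T0.card = 0 := by rw [hT0e]; simp
      have h1 : TNA.card = T1.card := by omega
      have h2 : T1.card ≤ T1.card * γ := by
        calc T1.card = T1.card * 1 := (mul_one _).symm
          _ ≤ T1.card * γ := Nat.mul_le_mul_left _ hγ1
      calc S.length ≤ A.card * γ + TNA.card := hmain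
        _ ≤ A.card * γ + T1.card * γ := by omega
        _ = (A.card + T1.card) * γ := by ring
        _ ≤ Iv.card * γ := Nat.mul_le_mul_right γ hindep1
        _ ≤ Iv.card * γ + 0 := by omega
    · obtain ⟨y, hy⟩ := hT0ne
      have hyK : y ∈ K := (Finset.mem_filter.mp hy).2
      have hyTNA : y ∈ TNA := Finset.mem_of_mem_filter _ hy
      have hynA : y ∉ A := hTnA y hyTNA
      obtain ⟨i0, hi0, htg⟩ := hpack y hyTNA
      have hv0K : vP S i0 ∈ K := hhostK i0 hi0 (htg ▸ hynA) (htg ▸ hyK)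
      push_neg at hcond
      obtain ⟨x, hxIv, hadjvx, hadjyx⟩ := hcond (vP S i0) hv0K y hyK
      -- x is not in A
      have hxA : x ∉ A := by
        intro hxA
        obtain ⟨ix, hself, hvix⟩ := hmemA.mp hxA
        have hnox : ∀ j : Fin S.length, j ≤ i0 → vP S j ≠ x := by
          intro j hj he
          rcases eq_or_lt_of_le hj with heq | hlt
          · apply Finset.disjoint_left.mp hdisj hv0K
            rw [heq] at he
            rw [he]
            exact hxIv
          · apply htnoadj i0 hi0 j hlt
            rw [htg, he]
            exact hadjyx.symm
        have hlt : i0 < ix := by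
          rcases le_or_gt ix i0 with h | h
          · exact absurd hvix (hnox ix h)
          · exact h
        obtain ⟨k, hk1, hk2⟩ := hself
        rw [hvix] at hk2
        exact hk2 (closes hadjvx hlt k)
      -- x is not in T
      have hxT : x ∉ T := by
        intro hxT
        obtain ⟨i', hi', htg'⟩ := Finset.mem_image.mp hxT
        rcases lt_trichotomy i' i0 with hlt | heq | hgt
        · have hadj' : G.Adj (vP S i') x := htg' ▸ htgtadj i' hi'
          have hv'K : vP S i' ∈ K := nbr_in_K hpart hIv hxIv hadj'
          have hne : vP S i' ≠ y := htg ▸ htnoplay i0 hi0 (htg ▸ hynA) i' (le_of_lt hlt)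
          apply htnoadj i0 hi0 i' hlt
          rw [htg]
          exact hK (Finset.mem_coe.mpr hv'K) (Finset.mem_coe.mpr hyK) hne
        · apply Finset.disjoint_left.mp hdisj hyK
          have : x = y := by rw [← htg', ← htg, heq]
          rw [← this]
          exact hxIv
        · obtain ⟨k, hk⟩ := htgtop i' hi'
          rw [htg'] at hk
          exact hk (closes hadjvx hgt k)
      -- A is contained in Iv
      have hAIv : ∀ u ∈ A, u ∈ Iv := by
        intro u hu
        rcases hpart u with huK | huIv
        · exfalso
          have hney : u ≠ y := fun he => hynA (he ▸ hu)
          have hadjuy : G.Adj u y :=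
            hK (Finset.mem_coe.mpr huK) (Finset.mem_coe.mpr hyK) hney
          exact hcore i0 hi0 u hu huK (htg ▸ hadjuy) hv0K
        · exact huIv
      -- stronger independence bound
      have hindep2 : A.card + T1.card + 1 ≤ Iv.card := by
        have hdisjAT1 : Disjoint A T1 := by
          rw [Finset.disjoint_left]
          intro a ha ha1
          exact hTnA a (Finset.mem_of_mem_filter _ ha1) ha
        have hxnotun : x ∉ A ∪ T1 := by
          rw [Finset.mem_union]
          rintro (h | h)
          · exact hxA h
          · exact hxT (Finset.mem_sdiff.mp (Finset.mem_of_mem_filter _ h)).1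
        have hind : IsIndep G ↑(insert x (A ∪ T1)) := by
          intro a ha b hb hne hadj
          have hmem : ∀ c, c ∈ (↑(insert x (A ∪ T1)) : Set V) → c ∈ Iv := by
            intro c hc
            rw [Finset.coe_insert, Set.mem_insert_iff] at hc
            rcases hc with rfl | hc
            · exact hxIv
            · rw [Finset.mem_coe, Finset.mem_union] at hc
              rcases hc with hc | hc
              · exact hAIv c hc
              · exact hT1Iv c hc
          exact hIv (Finset.mem_coe.mpr (hmem a ha)) (Finset.mem_coe.mpr (hmem b hb)) hne hadj
        have hle := hmaxind _ hind
        rw [Finset.card_insert_of_notMem hxnotun,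
          Finset.card_union_of_disjoint hdisjAT1] at hle
        omega
      have h1 : TNA.card ≤ T1.card + 1 := by omega
      have h2 : T1.card + 1 ≤ (T1.card + 1) * γ := by
        calc T1.card + 1 = (T1.card + 1) * 1 := (mul_one _).symm
          _ ≤ (T1.card + 1) * γ := Nat.mul_le_mul_left _ hγ1
      calc S.length ≤ A.card * γ + TNA.card := hmain
        _ ≤ A.card * γ + (T1.card + 1) * γ := by omega
        _ = (A.card + (T1.card + 1)) * γ := by ring
        _ ≤ Iv.card * γ := Nat.mul_le_mul_right γ (by omega)
        _ ≤ Iv.card * γ + 0 := by omega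

end UpperMain

end GrundyDom
open GrundyDom Finset

/-- for a split graph `G = (I* ∪ K, E)` with `|I*| = α(G)` and any
graph `H`, `γ_gr(G ∘ H) = |I*|·γ_gr(H) + n(G)`. -/
theorem stmt18 {V : Type*} [Fintype V] [DecidableEq V] (G : SimpleGraph V) [DecidableRel G.Adj] (K Iv : Finset V)
    (hpart : ∀ v, v ∈ K ∨ v ∈ Iv) (hdisj : Disjoint K Iv)
    (hK : G.IsClique ↑K) (hIv : IsIndep G ↑Iv)
    (hmaxind : ∀ J : Finset V, IsIndep G ↑J → J.card ≤ Iv.card)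
    {W : Type*} [Fintype W] [Nonempty W] (H : SimpleGraph W) :
    gammaGr (Lex G H) = Iv.card * gammaGr H + (if ∃ v ∈ K, ∃ w ∈ K, ∀ x ∈ Iv, ¬(G.Adj v x ∧ G.Adj w x) then 1 else 0) := by
  classical
  obtain ⟨S0, hS0leg, hS0len⟩ := lower_bound (H := H) hpart hdisj hK hIv hmaxind
  apply le_antisymm
  · rw [gammaGr]
    apply csSup_le
    · exact ⟨S0.length, S0, hS0leg, rfl⟩
    · rintro k ⟨S, hSleg, rfl⟩
      exact upper_bound hpart hdisj hK hIv hmaxind hSleg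
  · rw [← hS0len]
    exact length_le_gammaGr hS0leg
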